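/- Let d(y) = d_{abc}y^a y^b y^c be a cubic on ℝⁿ with quadratic map h, extended to ℂⁿ. Fix p⁰ ≠ 0, p ∈ ℝⁿ, θ ∈ ℝ with sin θ ≠ 0, and c, t > 0 with c·t·sin θ = p⁰. Let z̃ = x̃ + i ỹ ∈ ℂⁿ with ỹ = −p/(c t). Then the ℝⁿ-valued quantity q := 3 c t · Re(i e^{iθ} h(z̃)) satisfies 3 (p⁰)² h(x̃ + (cos θ / sin θ) ỹ) = 3 h(p) − p⁰ q. -/

import Mathlib

open Complex

/-- The complexified quadratic map of the symmetric cubic tensor `D`. -/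
noncomputable def hC {n : ℕ} (D : Fin n → Fin n → Fin n → ℝ) (z : Fin n → ℂ) : Fin n → ℂ :=
  fun a => ∑ b, ∑ c, (D a b c : ℂ) * z b * z c

/-- The real quadratic map of the symmetric cubic tensor `D`. -/
def hR {n : ℕ} (D : Fin n → Fin n → Fin n → ℝ) (y : Fin n → ℝ) : Fin n → ℝ :=
  fun a => ∑ b, ∑ c, D a b c * y b * y c

/-- Key identity in the inversion of the BPS map: with `p⁰ = c·t·sin θ ≠ 0`,
`ỹ = −p/(ct)`, `z̃ = x̃ + iỹ` and `q := 3ct·Re(i e^{iθ} h(z̃))`, one has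
`3(p⁰)² h(x̃ + (cos θ/sin θ)ỹ) = 3h(p) − p⁰ q`. -/
theorem stmt10 {n : ℕ} (D : Fin n → Fin n → Fin n → ℝ)
    (hsymm₁ : ∀ a b c, D a b c = D a c b) (hsymm₂ : ∀ a b c, D a b c = D b a c)
    (p0 : ℝ) (hp0 : p0 ≠ 0) (p : Fin n → ℝ) (θ : ℝ) (hθ : Real.sin θ ≠ 0)
    (c t : ℝ) (hc : 0 < c) (ht : 0 < t) (hct : c * t * Real.sin θ = p0)
    (xt yt : Fin n → ℝ) (hyt : yt = fun j => -(p j) / (c * t))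
    (zt : Fin n → ℂ) (hzt : zt = fun j => (xt j : ℂ) + (yt j : ℂ) * Complex.I)
    (q : Fin n → ℝ)
    (hq : q = fun a => 3 * c * t *
      (Complex.I * Complex.exp ((θ : ℂ) * Complex.I) * hC D zt a).re) :
    ∀ a, 3 * p0 ^ 2 *
        hR D (fun j => xt j + (Real.cos θ / Real.sin θ) * yt j) a =
      3 * hR D p a - p0 * q a := by
  intro a
  have hct0 : c * t ≠ 0 := by positivity
  have hp : ∀ j, p j = -(c * t) * yt j := by
    intro j; rw [hyt]; field_simp
  set S1 := ∑ b, ∑ e, D a b e * xt b * xt e with hS1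
  set S2 := ∑ b, ∑ e, D a b e * xt b * yt e with hS2
  set S3 := ∑ b, ∑ e, D a b e * yt b * yt e with hS3
  -- cross symmetry
  have hcross : ∑ b, ∑ e, D a b e * yt b * xt e = S2 := by
    rw [Finset.sum_comm]
    exact Finset.sum_congr rfl fun b _ => Finset.sum_congr rfl fun e _ => by
      rw [hsymm₁]; ring
  -- hR of p
  have hhp : hR D p a = (c * t) ^ 2 * S3 := by
    simp only [hR, hS3, Finset.mul_sum]
    exact Finset.sum_congr rfl fun b _ => Finset.sum_congr rfl fun e _ => by
      rw [hp, hp]; ring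
  -- hR of shifted argument
  have hhl : hR D (fun j => xt j + (Real.cos θ / Real.sin θ) * yt j) a =
      S1 + 2 * (Real.cos θ / Real.sin θ) * S2 + (Real.cos θ / Real.sin θ) ^ 2 * S3 := by
    have : hR D (fun j => xt j + (Real.cos θ / Real.sin θ) * yt j) a =
        ∑ b, ∑ e, (D a b e * xt b * xt e
          + (Real.cos θ / Real.sin θ) * (D a b e * xt b * yt e)
          + (Real.cos θ / Real.sin θ) * (D a b e * yt b * xt e)
          + (Real.cos θ / Real.sin θ) ^ 2 * (D a b e * yt b * yt e)) := by
      simp only [hR]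
      exact Finset.sum_congr rfl fun b _ => Finset.sum_congr rfl fun e _ => by ring
    rw [this]
    simp only [Finset.sum_add_distrib, ← Finset.mul_sum]
    rw [hcross]
    ring
  -- the real part of q
  have hexp : Complex.exp ((θ : ℂ) * Complex.I)
      = (Real.cos θ : ℂ) + (Real.sin θ : ℂ) * Complex.I := by
    rw [Complex.exp_mul_I]; simp [Complex.ofReal_cos, Complex.ofReal_sin]
  have hqa : q a = 3 * c * t *
      (-(Real.sin θ) * (S1 - S3) - Real.cos θ * (2 * S2)) := by
    rw [hq]
    simp only
    congr 1
    have : Complex.I * Complex.exp ((θ : ℂ) * Complex.I) * hC D zt a =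
        ∑ b, ∑ e, Complex.I * ((Real.cos θ : ℂ) + (Real.sin θ : ℂ) * Complex.I) *
          (D a b e : ℂ) * ((xt b : ℂ) + (yt b : ℂ) * Complex.I)
          * ((xt e : ℂ) + (yt e : ℂ) * Complex.I) := by
      rw [hexp, hC, hzt]
      simp only [Finset.mul_sum]
      exact Finset.sum_congr rfl fun b _ => Finset.sum_congr rfl fun e _ => by ring
    rw [this, Complex.re_sum]
    have : ∀ b : Fin n, (∑ e, Complex.I * ((Real.cos θ : ℂ) + (Real.sin θ : ℂ) * Complex.I) *
          (D a b e : ℂ) * ((xt b : ℂ) + (yt b : ℂ) * Complex.I)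
          * ((xt e : ℂ) + (yt e : ℂ) * Complex.I)).re =
        ∑ e, (-(Real.sin θ) * (D a b e * xt b * xt e - D a b e * yt b * yt e)
          - Real.cos θ * (D a b e * xt b * yt e + D a b e * yt b * xt e)) := by
      intro b
      rw [Complex.re_sum]
      exact Finset.sum_congr rfl fun e _ => by
        simp [Complex.mul_re, Complex.add_re, Complex.add_im, Complex.mul_im,
          Complex.cos_ofReal_re, Complex.sin_ofReal_re]; ring
    simp only [this]
    simp only [Finset.sum_sub_distrib, Finset.sum_add_distrib, ← Finset.mul_sum,
      ← hS1, ← hS2, ← hS3, hcross]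
    ring
  rw [hhl, hhp, hqa, ← hct]
  have hpyth : Real.sin θ ^ 2 + Real.cos θ ^ 2 = 1 := Real.sin_sq_add_cos_sq θ
  field_simp
  linear_combination S3 * hpyth
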